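/- Let G be a finitely generated torsion-free nilpotent group and T ⊆ G a subset such that the subgroup of G generated by T has finite index in G. If ξ, η ∈ Pol(G) satisfy ξ(1) = η(1) and ∂'_t ξ = ∂'_t η for every t ∈ T, then ξ = η. -/

import Mathlib

open Pointwise

def lDiff {G : Type*} [Group G] (g : G) (ξ : G → ℝ) : G → ℝ :=
  fun h => ξ (g⁻¹ * h) - ξ h

def rDiff {G : Type*} [Group G] (g : G) (ξ : G → ℝ) : G → ℝ :=
  fun h => ξ (h * g) - ξ h

/-- A monoid is torsion-free if no element other than `1` has finite order
(the definition of `Monoid.IsTorsionFree` in the older Mathlib). -/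
def Monoid.IsTorsionFree (G : Type*) [Monoid G] : Prop :=
  ∀ g : G, g ≠ 1 → ¬IsOfFinOrder g

def IsPolyLe {G : Type*} [Group G] (d : ℕ) (ξ : G → ℝ) : Prop :=
  ∀ gs : List G, gs.length = d + 1 → gs.foldr lDiff ξ = 0

lemma aux_foldr_zero {G : Type*} [Group G] (gs : List G) :
    gs.foldr lDiff (0 : G → ℝ) = 0 := by
  induction gs with
  | nil => rfl
  | cons g gs ih =>
    rw [List.foldr_cons, ih]
    funext h
    simp [lDiff]

lemma aux_poly_long {G : Type*} [Group G] {d : ℕ} {ξ : G → ℝ} (h : IsPolyLe d ξ)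
    (gs : List G) (hlen : d + 1 ≤ gs.length) : gs.foldr lDiff ξ = 0 := by
  have hsplit : gs = gs.take (gs.length - (d+1)) ++ gs.drop (gs.length - (d+1)) :=
    (List.take_append_drop _ _).symm
  rw [hsplit, List.foldr_append, h _ (by simp; omega)]
  exact aux_foldr_zero _

lemma aux_foldr_sub {G : Type*} [Group G] (gs : List G) (ξ η : G → ℝ) :
    gs.foldr lDiff (fun h => ξ h - η h) =
      fun h => (gs.foldr lDiff ξ) h - (gs.foldr lDiff η) h := by
  induction gs with
  | nil => rfl
  | cons g gs ih =>
    funext h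
    simp only [List.foldr_cons, ih, lDiff]
    ring

/-- the discrete difference operator on ℤ-indexed sequences -/
def dOp (f : ℤ → ℝ) : ℤ → ℝ := fun n => f (n - 1) - f n

lemma aux_restrict {G : Type*} [Group G] (g : G) :
    ∀ (k : ℕ) (ψ : G → ℝ),
      (fun n : ℤ => ((List.replicate k g).foldr lDiff ψ) (g ^ n)) =
        dOp^[k] (fun n : ℤ => ψ (g ^ n)) := by
  intro k
  induction k with
  | zero => intro ψ; rfl
  | succ k ih =>
    intro ψ
    have : (List.replicate (k+1) g) = g :: List.replicate k g := rfl
    rw [this, Function.iterate_succ_apply', ← ih ψ]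
    funext n
    show lDiff g _ (g ^ n) = _
    simp only [lDiff, dOp]
    congr 2
    rw [← zpow_neg_one, ← zpow_add]
    ring_nf

lemma aux_linear (f : ℤ → ℝ) (c : ℝ) (h : ∀ n, f (n - 1) - f n = c) :
    ∀ n : ℤ, f n = f 0 - c * n := by
  intro n
  induction n using Int.induction_on with
  | zero => simp
  | succ n ih =>
    have h2 : f ((n : ℤ) + 1) = f n - c := by
      have := h ((n : ℤ) + 1)
      have e : ((n : ℤ) + 1) - 1 = n := by ring
      rw [e] at this
      linarith
    rw [h2, ih]
    push_cast
    ring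
  | pred n ih =>
    have h2 : f (-(n : ℤ) - 1) = f (-n) + c := by
      have := h (-(n : ℤ))
      linarith
    rw [h2, ih]
    push_cast
    ring

lemma aux_const (k : ℕ) : ∀ (f : ℤ → ℝ), (Set.range f).Finite →
    dOp^[k] f = 0 → ∀ n, f n = f 0 := by
  induction k with
  | zero =>
    intro f _ h n
    have h0 := congrFun h n
    have h1 := congrFun h 0
    simp at h0 h1; rw [h0, h1]
  | succ k ih =>
    intro f hfin h n
    have hdf : dOp^[k] (dOp f) = 0 := by
      rw [← Function.iterate_succ_apply]; exact h
    have hdfin : (Set.range (dOp f)).Finite := by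
      have : Set.range (dOp f) ⊆ Set.range f - Set.range f := by
        rintro x ⟨m, rfl⟩
        exact Set.sub_mem_sub ⟨m - 1, rfl⟩ ⟨m, rfl⟩
      exact (hfin.sub hfin).subset this
    have hc := ih (dOp f) hdfin hdf
    set c := dOp f 0 with hcdef
    have hlin : ∀ m : ℤ, f m = f 0 - c * m :=
      aux_linear f c (fun m => hc m)
    have hc0 : c = 0 := by
      by_contra hne
      have hinj : Function.Injective f := by
        intro a b hab
        rw [hlin a, hlin b] at hab
        have : c * a = c * b := by linarith
        exact_mod_cast mul_left_cancel₀ hne this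
      exact (Set.infinite_range_of_injective hinj) hfin
    rw [hlin n, hc0]; ring

theorem stmt10 {G : Type*} [Group G] [Group.FG G] (hTF : Monoid.IsTorsionFree G)
    [Group.IsNilpotent G] (T : Set G) (hT : (Subgroup.closure T).FiniteIndex)
    (ξ η : G → ℝ) (hξ : ∃ d : ℕ, IsPolyLe d ξ) (hη : ∃ d : ℕ, IsPolyLe d η)
    (h1 : ξ 1 = η 1) (hdiff : ∀ t ∈ T, rDiff t ξ = rDiff t η) : ξ = η := by
  obtain ⟨d₁, hξ⟩ := hξ
  obtain ⟨d₂, hη⟩ := hη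
  set ζ : G → ℝ := fun g => ξ g - η g with hζdef
  -- ζ is right-invariant under closure T
  have hK : ∀ s ∈ Subgroup.closure T, ∀ h : G, ζ (h * s) = ζ h := by
    have : Subgroup.closure T ≤
        { carrier := {s : G | ∀ h : G, ζ (h * s) = ζ h}
          one_mem' := by intro h; simp
          mul_mem' := by
            intro a b ha hb h
            rw [← mul_assoc, hb, ha]
          inv_mem' := by
            intro a ha h
            have := ha (h * a⁻¹)
            rw [inv_mul_cancel_right] at this
            exact this.symm } := by
      rw [Subgroup.closure_le]
      intro t ht h
      have := congrFun (hdiff t ht) h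
      simp only [rDiff] at this
      show ζ (h * t) = ζ h
      simp only [hζdef]
      linarith
    exact fun s hs h => this hs h
  -- ζ has finite range
  haveI := hT
  haveI : Finite (G ⧸ Subgroup.closure T) := Subgroup.finite_quotient_of_finiteIndex (H := Subgroup.closure T)
  have hfact : ∀ a b : G, (QuotientGroup.mk a : G ⧸ Subgroup.closure T) = QuotientGroup.mk b →
      ζ a = ζ b := by
    intro a b hab
    have : a⁻¹ * b ∈ Subgroup.closure T := QuotientGroup.eq.mp hab
    have h3 := hK _ this a
    rw [mul_inv_cancel_left a b] at h3
    exact h3.symm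
  have hfin : (Set.range ζ).Finite := by
    have : Set.range ζ ⊆ Set.range (fun q : G ⧸ Subgroup.closure T =>
        ζ (Quotient.out q)) := by
      rintro x ⟨a, rfl⟩
      exact ⟨QuotientGroup.mk a, hfact _ _ (by simp [QuotientGroup.out_eq'])⟩
    exact (Set.finite_range _).subset this
  -- ζ is polynomial of degree ≤ max d₁ d₂
  set D := max d₁ d₂ with hD
  have hζpoly : ∀ gs : List G, gs.length = D + 1 → gs.foldr lDiff ζ = 0 := by
    intro gs hlen
    rw [hζdef, aux_foldr_sub, aux_poly_long hξ gs (by omega : d₁ + 1 ≤ gs.length),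
      aux_poly_long hη gs (by omega : d₂ + 1 ≤ gs.length)]
    funext h; simp
  -- conclude
  funext g
  have hrepl := hζpoly (List.replicate (D+1) g) (by simp)
  have hres := aux_restrict g (D+1) ζ
  rw [hrepl] at hres
  have hiter : dOp^[D+1] (fun n : ℤ => ζ (g ^ n)) = 0 := by
    rw [← hres]; rfl
  have hfinf : (Set.range (fun n : ℤ => ζ (g ^ n))).Finite :=
    hfin.subset (by rintro x ⟨m, rfl⟩; exact ⟨g ^ m, rfl⟩)
  have := aux_const (D+1) (fun n : ℤ => ζ (g ^ n)) hfinf hiter 1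
  simp only [zpow_one, zpow_zero] at this
  have hz1 : ζ 1 = 0 := by simp [hζdef, h1]
  have : ζ g = 0 := by rw [this, hz1]
  simpa [hζdef, sub_eq_zero] using this
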